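/- arXiv:2205.12820 — 3 statements merged into one kernel-verified Lean document; each statement's English description precedes it below -/
import Mathlib

section
/- For all real numbers a, b with |a| ≤ b, one has b − |a| ≤ arcosh(cosh b / cosh a) ≤ b − |a| + log 2. -/
set_option maxHeartbeats 1000000

open Real

noncomputable def arcosh (t : ℝ) : ℝ := Real.log (t + Real.sqrt (t ^ 2 - 1))

theorem arcosh_cosh_div_cosh_bounds (a b : ℝ) (hab : |a| ≤ b) :
    b - |a| ≤ _root_.arcosh (Real.cosh b / Real.cosh a) ∧
    _root_.arcosh (Real.cosh b / Real.cosh a) ≤ b - |a| + Real.log 2 := by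
  have hc0 : (0:ℝ) ≤ |a| := abs_nonneg a
  have hb0 : (0:ℝ) ≤ b := hc0.trans hab
  rw [← Real.cosh_abs (x := a)]
  set c := |a| with hc
  set u := Real.exp b with hu
  set v := Real.exp c with hv
  have hu0 : 0 < u := Real.exp_pos b
  have hv0 : 0 < v := Real.exp_pos c
  have hv1 : 1 ≤ v := Real.one_le_exp hc0
  have huv : v ≤ u := Real.exp_le_exp.mpr hab
  have hv2 : 1 ≤ v^2 := by nlinarith
  have huv2 : v^2 ≤ u^2 := by nlinarith
  have hv4 : 1 ≤ v^4 := by nlinarith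
  have hcb : Real.cosh b = (u + 1/u) / 2 := by
    rw [Real.cosh_eq, Real.exp_neg]; field_simp; rw [hu]; ring
  have hcc : Real.cosh c = (v + 1/v) / 2 := by
    rw [Real.cosh_eq, Real.exp_neg]; field_simp; rw [hv]; ring
  set t := Real.cosh b / Real.cosh c with htdef
  have ht : t = (u^2 + 1) * v / ((v^2 + 1) * u) := by
    rw [htdef, hcb, hcc]; field_simp
  have huv1 : 1 ≤ u * v := by nlinarith
  have ht1 : 1 ≤ t := by
    rw [ht, le_div_iff₀ (by positivity)]
    nlinarith [mul_nonneg (sub_nonneg.mpr huv) (sub_nonneg.mpr huv1)]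
  have ht2 : 0 ≤ t^2 - 1 := by nlinarith
  set S := Real.sqrt (t^2 - 1) with hS
  have hS0 : 0 ≤ S := Real.sqrt_nonneg _
  have hS2 : S^2 = t^2 - 1 := Real.sq_sqrt ht2
  have hpos : 0 < t + S := by linarith
  have hw : Real.exp (b - c) = u / v := by rw [Real.exp_sub]
  have hD : (0:ℝ) < (v * ((v^2+1) * u))^2 := by positivity
  have h1 : t^2 - 1 = (v^2 * ((u^2 - v^2) * (u^2*v^2 - 1))) / (v * ((v^2+1) * u))^2 := by
    rw [ht]; field_simp; ring
  have harc : _root_.arcosh t = Real.log (t + S) := by rw [_root_.arcosh, hS]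
  clear_value t S u v c
  constructor
  · rw [harc, Real.le_log_iff_exp_le hpos, hw]
    by_cases h : u / v ≤ t
    · linarith
    · have hx : 0 ≤ u / v - t := by linarith
      have : u / v - t ≤ S := by
        rw [hS, Real.le_sqrt hx (by linarith)]
        have h3 : (u/v - t)^2 = (u^2 - v^2)^2 / (v * ((v^2+1) * u))^2 := by
          rw [ht]; field_simp; ring
        rw [h3, h1, div_le_div_iff_of_pos_right hD]
        nlinarith [mul_nonneg (mul_nonneg (sub_nonneg.mpr huv2) (sq_nonneg u)) (sub_nonneg.mpr hv4), sq_nonneg (v * ((v^2+1)*u))]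
      linarith
  · rw [harc, Real.log_le_iff_le_exp hpos, Real.exp_add, Real.exp_log two_pos, hw]
    have hy : 0 ≤ 2 * (u/v) - t := by
      have h4 : 2 * (u/v) - t = (u^2*v^2 + 2*u^2 - v^2) / (v * ((v^2+1) * u)) := by
        rw [ht]; field_simp; ring
      rw [h4]
      apply div_nonneg _ (by positivity)
      nlinarith
    have hsq : t^2 - 1 ≤ (2 * (u/v) - t)^2 := by
      have h2 : (2 * (u/v) - t)^2 = (u^2*v^2 + 2*u^2 - v^2)^2 / (v * ((v^2+1) * u))^2 := by
        rw [ht]; field_simp; ring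
      rw [h1, h2, div_le_div_iff_of_pos_right hD]
      nlinarith [mul_nonneg (mul_nonneg (sub_nonneg.mpr huv2) (sub_nonneg.mpr hv2)) (sq_nonneg (u*v)), sq_nonneg (u^2*v^2 - v^2), sq_nonneg (u*v), mul_nonneg (sub_nonneg.mpr huv2) (sub_nonneg.mpr hv2), sq_nonneg (v * ((v^2+1)*u)), sq_nonneg (u^2 - v^2)]
    have : S ≤ 2 * (u/v) - t := hS ▸ (Real.sqrt_le_left hy).mpr hsq
    linarith
end

section
/- Fix an integer d ≥ 3 and let ω_{d−1} > 0 be a constant. For s ≥ 0 define g_R(s) = e^{−(d−2)R} · ω_{d−1} · ∫_0^{arcosh(cosh R / cosh s)} sinh^{d−2}(u) du, for R ≥ s. Then for every fixed s ≥ 0, g_R(s) converges, as R → ∞, to (ω_{d−1} / ((d−2) 2^{d−2})) · cosh^{−(d−2)}(s). -/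
open Real Filter intervalIntegral

lemma integral_exp_mul' (c : ℝ) (hc : c ≠ 0) (T : ℝ) :
    ∫ u in (0:ℝ)..T, exp (c*u) = (exp (c*T) - 1)/c := by
  rw [intervalIntegral.integral_comp_mul_left (fun x => exp x) hc]
  simp [integral_exp, smul_eq_mul]
  ring

lemma key_int (n : ℕ) (hn : 1 ≤ n) :
    Tendsto (fun T : ℝ => exp (-(n:ℝ)*T) * ∫ u in (0:ℝ)..T, sinh u ^ n) atTop
      (nhds (1/((n:ℝ)*2^n))) := by
  have hn0 : (0:ℝ) < n := by exact_mod_cast hn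
  have h2 : (0:ℝ) < 2^n := by positivity
  -- upper bound: sinh u ^ n ≤ exp(n u)/2^n for u ≥ 0
  have hub : ∀ T : ℝ, 0 ≤ T →
      exp (-(n:ℝ)*T) * (∫ u in (0:ℝ)..T, sinh u ^ n) ≤ 1/((n:ℝ)*2^n) := by
    intro T hT
    have hint : (∫ u in (0:ℝ)..T, sinh u ^ n) ≤ ∫ u in (0:ℝ)..T, exp ((n:ℝ)*u) / 2^n := by
      apply intervalIntegral.integral_mono_on hT
      · exact ((continuous_sinh.pow n).intervalIntegrable _ _)
      · exact (((continuous_exp.comp (continuous_const.mul continuous_id)).div_const _).intervalIntegrable _ _)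
      · intro u hu
        have hu0 : 0 ≤ u := hu.1
        have h1 : sinh u ≤ exp u / 2 := by
          rw [sinh_eq]; have := exp_pos (-u); linarith [this.le]
        have h0 : 0 ≤ sinh u := sinh_nonneg_iff.mpr hu0
        calc sinh u ^ n ≤ (exp u / 2) ^ n := pow_le_pow_left₀ h0 h1 n
          _ = exp ((n:ℝ)*u) / 2^n := by
              rw [div_pow, ← exp_nat_mul]
    have hint2 : (∫ u in (0:ℝ)..T, exp ((n:ℝ)*u) / 2^n) = (exp ((n:ℝ)*T) - 1)/((n:ℝ)*2^n) := by
      rw [intervalIntegral.integral_div, integral_exp_mul' _ hn0.ne']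
      field_simp
    have he : 0 < exp (-(n:ℝ)*T) := exp_pos _
    calc exp (-(n:ℝ)*T) * (∫ u in (0:ℝ)..T, sinh u ^ n)
        ≤ exp (-(n:ℝ)*T) * ((exp ((n:ℝ)*T) - 1)/((n:ℝ)*2^n)) := by
          rw [← hint2]; exact mul_le_mul_of_nonneg_left hint he.le
      _ ≤ 1/((n:ℝ)*2^n) := by
          rw [neg_mul, exp_neg]
          have he2 := exp_pos ((n:ℝ)*T)
          have heq : (exp ((n:ℝ)*T))⁻¹ * (exp ((n:ℝ)*T)/((n:ℝ)*2^n)) = 1/((n:ℝ)*2^n) := by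
            field_simp
          calc (exp ((n:ℝ)*T))⁻¹ * ((exp ((n:ℝ)*T) - 1)/((n:ℝ)*2^n))
              ≤ (exp ((n:ℝ)*T))⁻¹ * (exp ((n:ℝ)*T)/((n:ℝ)*2^n)) := by
                gcongr; linarith
            _ = 1/((n:ℝ)*2^n) := heq
  -- lower bound
  have hlb : ∀ T : ℝ, 0 ≤ T →
      (1 - exp (-(n:ℝ)*T))/((n:ℝ)*2^n) - (n:ℝ)*(T*exp (-T))/2^n ≤
        exp (-(n:ℝ)*T) * (∫ u in (0:ℝ)..T, sinh u ^ n) := by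
    intro T hT
    have he : (0:ℝ) ≤ exp (-(n:ℝ)*T) := (exp_pos _).le
    have hcont1 : Continuous fun u : ℝ => exp ((n:ℝ)*u) := by fun_prop
    have hcont2 : Continuous fun u : ℝ => exp (((n:ℝ)-1)*u) := by fun_prop
    have hcontlo : Continuous fun u : ℝ => (exp ((n:ℝ)*u) - (n:ℝ) * exp (((n:ℝ)-1)*u))/2^n := by
      fun_prop
    have hpt : ∀ u ∈ Set.Icc (0:ℝ) T,
        (exp ((n:ℝ)*u) - (n:ℝ) * exp (((n:ℝ)-1)*u))/2^n ≤ sinh u ^ n := by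
      intro u hu
      have hu0 : 0 ≤ u := hu.1
      have hsinh : sinh u = exp u * (1 - exp (-2*u)) / 2 := by
        rw [sinh_eq, show -u = u + (-2*u) by ring, exp_add]; ring
      have hbern : 1 - (n:ℝ)*exp (-2*u) ≤ (1 - exp (-2*u))^n := by
        have h1 : exp (-2*u) ≤ 1 := exp_le_one_iff.mpr (by linarith)
        have := one_add_mul_le_pow (a := -exp (-2*u)) (by linarith [(exp_pos (-2*u)).le]) n
        calc 1 - (n:ℝ)*exp (-2*u) = 1 + (n:ℝ)*(-exp (-2*u)) := by ring
          _ ≤ (1 + -exp (-2*u))^n := this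
          _ = (1 - exp (-2*u))^n := by ring_nf
      have hexpow : sinh u ^ n = exp ((n:ℝ)*u) * (1 - exp (-2*u))^n / 2^n := by
        rw [hsinh, div_pow, mul_pow, ← exp_nat_mul]
      rw [hexpow]
      have hstep1 : exp ((n:ℝ)*u) * (1 - (n:ℝ)*exp (-2*u)) ≤
          exp ((n:ℝ)*u) * (1 - exp (-2*u))^n :=
        mul_le_mul_of_nonneg_left hbern (exp_pos _).le
      have hstep2 : exp ((n:ℝ)*u) - (n:ℝ) * exp (((n:ℝ)-1)*u) ≤
          exp ((n:ℝ)*u) * (1 - (n:ℝ)*exp (-2*u)) := by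
        have h3 : exp ((n:ℝ)*u) * exp (-2*u) = exp (((n:ℝ)-2)*u) := by
          rw [← exp_add]; ring_nf
        have h4 : exp (((n:ℝ)-2)*u) ≤ exp (((n:ℝ)-1)*u) := by
          apply exp_le_exp.mpr; nlinarith
        nlinarith [hn0]
      have h2n : (0:ℝ) < 2^n := by positivity
      rw [div_le_div_iff₀ h2n h2n]
      nlinarith [h2]
    have hmono : (∫ u in (0:ℝ)..T, (exp ((n:ℝ)*u) - (n:ℝ) * exp (((n:ℝ)-1)*u))/2^n) ≤
        ∫ u in (0:ℝ)..T, sinh u ^ n :=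
      intervalIntegral.integral_mono_on hT (hcontlo.intervalIntegrable _ _)
        ((continuous_sinh.pow n).intervalIntegrable _ _) hpt
    have hIle : (∫ u in (0:ℝ)..T, exp (((n:ℝ)-1)*u)) ≤ T * exp (((n:ℝ)-1)*T) := by
      have hmono2 : (∫ u in (0:ℝ)..T, exp (((n:ℝ)-1)*u)) ≤
          ∫ _u in (0:ℝ)..T, exp (((n:ℝ)-1)*T) := by
        apply intervalIntegral.integral_mono_on hT (hcont2.intervalIntegrable _ _)
          (intervalIntegrable_const)
        intro u hu
        apply exp_le_exp.mpr
        have hge : ((n:ℝ)-1) ≥ 0 := by simp only [ge_iff_le, sub_nonneg]; exact_mod_cast hn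
        nlinarith [hu.2]
      simpa using hmono2
    have hsplit : (∫ u in (0:ℝ)..T, (exp ((n:ℝ)*u) - (n:ℝ) * exp (((n:ℝ)-1)*u))/2^n) =
        ((exp ((n:ℝ)*T) - 1)/(n:ℝ) - (n:ℝ) * ∫ u in (0:ℝ)..T, exp (((n:ℝ)-1)*u))/2^n := by
      rw [intervalIntegral.integral_div,
        intervalIntegral.integral_sub (g := fun u => (n:ℝ) * exp (((n:ℝ)-1)*u)) (hcont1.intervalIntegrable _ _)
          ((continuous_const.mul hcont2).intervalIntegrable _ _),
        intervalIntegral.integral_const_mul, integral_exp_mul' _ hn0.ne']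
    have key1 : exp (-(n:ℝ)*T) * exp ((n:ℝ)*T) = 1 := by rw [← exp_add]; simp
    have key2 : exp (-(n:ℝ)*T) * exp (((n:ℝ)-1)*T) = exp (-T) := by
      rw [← exp_add]; ring_nf
    have heq2 : exp (-(n:ℝ)*T) * (((exp ((n:ℝ)*T) - 1)/(n:ℝ) -
          (n:ℝ)*(T*exp (((n:ℝ)-1)*T)))/2^n) =
        (1 - exp (-(n:ℝ)*T))/((n:ℝ)*2^n) - (n:ℝ)*(T*exp (-T))/2^n := by
      linear_combination key1/((n:ℝ)*2^n) - ((n:ℝ)*T/2^n) * key2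
    calc (1 - exp (-(n:ℝ)*T))/((n:ℝ)*2^n) - (n:ℝ)*(T*exp (-T))/2^n
        = exp (-(n:ℝ)*T) * (((exp ((n:ℝ)*T) - 1)/(n:ℝ) -
            (n:ℝ)*(T*exp (((n:ℝ)-1)*T)))/2^n) := heq2.symm
      _ ≤ exp (-(n:ℝ)*T) * (((exp ((n:ℝ)*T) - 1)/(n:ℝ) -
            (n:ℝ)*∫ u in (0:ℝ)..T, exp (((n:ℝ)-1)*u))/2^n) := by
          gcongr
      _ = exp (-(n:ℝ)*T) * ∫ u in (0:ℝ)..T, (exp ((n:ℝ)*u) - (n:ℝ) * exp (((n:ℝ)-1)*u))/2^n := by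
          rw [hsplit]
      _ ≤ exp (-(n:ℝ)*T) * ∫ u in (0:ℝ)..T, sinh u ^ n :=
          mul_le_mul_of_nonneg_left hmono he
  -- squeeze
  have hexp0 : Tendsto (fun T : ℝ => exp (-(n:ℝ)*T)) atTop (nhds 0) := by
    apply Real.tendsto_exp_atBot.comp
    have h := (tendsto_id (α := ℝ)).const_mul_atTop hn0
    exact (tendsto_neg_atTop_atBot.comp h).congr (fun x => by simp [Function.comp, neg_mul])
  have hTe : Tendsto (fun T : ℝ => T * exp (-T)) atTop (nhds 0) := by
    simpa using tendsto_pow_mul_exp_neg_atTop_nhds_zero 1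
  have hlo : Tendsto (fun T : ℝ =>
      (1 - exp (-(n:ℝ)*T))/((n:ℝ)*2^n) - (n:ℝ)*(T*exp (-T))/2^n) atTop
      (nhds (1/((n:ℝ)*2^n))) := by
    have h1 := ((tendsto_const_nhds (x := (1:ℝ)) (f := atTop)).sub hexp0).div_const ((n:ℝ)*2^n)
    have h2' := ((hTe.const_mul (n:ℝ)).div_const ((2:ℝ)^n))
    simpa using h1.sub h2'
  exact tendsto_of_tendsto_of_tendsto_of_le_of_le' hlo tendsto_const_nhds
    ((eventually_ge_atTop 0).mono hlb) ((eventually_ge_atTop 0).mono hub)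

lemma arcosh_tendsto (s : ℝ) :
    Tendsto (fun R : ℝ => _root_.arcosh (Real.cosh R / Real.cosh s)) atTop atTop := by
  have hcs : (0:ℝ) < Real.cosh s := Real.cosh_pos s
  have hch : Tendsto Real.cosh atTop atTop := by
    apply tendsto_atTop_mono (fun R => ?_) (Real.tendsto_exp_atTop.atTop_div_const two_pos)
    rw [Real.cosh_eq]
    have := (Real.exp_pos (-R)).le
    linarith
  have h1 : Tendsto (fun R : ℝ => Real.cosh R / Real.cosh s) atTop atTop :=
    hch.atTop_div_const hcs
  have h2 : Tendsto (fun R : ℝ => Real.log (Real.cosh R / Real.cosh s)) atTop atTop :=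
    Real.tendsto_log_atTop.comp h1
  apply tendsto_atTop_mono _ h2
  intro R
  set t := Real.cosh R / Real.cosh s with ht
  have ht0 : 0 < t := div_pos (Real.cosh_pos R) hcs
  exact Real.log_le_log ht0 (le_add_of_nonneg_right (Real.sqrt_nonneg _))

lemma expfac (s : ℝ) :
    Tendsto (fun R : ℝ => exp (_root_.arcosh (Real.cosh R / Real.cosh s) - R)) atTop
      (nhds (1 / Real.cosh s)) := by
  have hcs : (0:ℝ) < Real.cosh s := Real.cosh_pos s
  have heq : ∀ R : ℝ, exp (_root_.arcosh (Real.cosh R / Real.cosh s) - R) =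
      exp (-R) * Real.cosh R / Real.cosh s +
        Real.sqrt ((exp (-R) * Real.cosh R / Real.cosh s)^2 - exp (-R)^2) := by
    intro R
    set t := Real.cosh R / Real.cosh s with ht
    have ht0 : 0 < t := div_pos (Real.cosh_pos R) hcs
    have hpos : 0 < t + Real.sqrt (t^2 - 1) :=
      lt_add_of_pos_of_le ht0 (Real.sqrt_nonneg _)
    have h1 : exp (_root_.arcosh t) = t + Real.sqrt (t^2 - 1) := Real.exp_log hpos
    have h2 : exp (-R) * Real.sqrt (t^2 - 1) =
        Real.sqrt ((exp (-R) * t)^2 - exp (-R)^2) := by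
      rw [show (exp (-R) * t)^2 - exp (-R)^2 = exp (-R)^2 * (t^2 - 1) by ring,
        Real.sqrt_mul (sq_nonneg _), Real.sqrt_sq (exp_pos _).le]
    rw [Real.exp_sub, h1, mul_div_assoc]
    rw [← ht]
    rw [show (t + Real.sqrt (t^2-1)) / exp R = exp (-R) * t + exp (-R) * Real.sqrt (t^2-1) by
      rw [Real.exp_neg]; field_simp]
    rw [h2]
  have hE : Tendsto (fun R : ℝ => exp (-R)) atTop (nhds 0) := by
    exact (Real.tendsto_exp_atBot.comp tendsto_neg_atTop_atBot).congr
      (fun x => by simp [Function.comp])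
  have ha : Tendsto (fun R : ℝ => exp (-R) * Real.cosh R / Real.cosh s) atTop
      (nhds (1/(2*Real.cosh s))) := by
    have heq2 : ∀ R : ℝ, exp (-R) * Real.cosh R / Real.cosh s =
        (1 + exp (-R)^2)/(2*Real.cosh s) := by
      intro R
      rw [Real.cosh_eq, Real.exp_neg]
      have := Real.exp_ne_zero R
      field_simp
    simp only [heq2]
    have := ((tendsto_const_nhds (x := (1:ℝ)) (f := atTop)).add
      (hE.mul hE)).div_const (2*Real.cosh s)
    simpa [sq] using this
  have hb : Tendsto (fun R : ℝ =>
      Real.sqrt ((exp (-R) * Real.cosh R / Real.cosh s)^2 - exp (-R)^2)) atTop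
      (nhds (1/(2*Real.cosh s))) := by
    have h3 : Tendsto (fun R : ℝ =>
        (exp (-R) * Real.cosh R / Real.cosh s)^2 - exp (-R)^2) atTop
        (nhds ((1/(2*Real.cosh s))^2)) := by
      have := (ha.pow 2).sub (hE.pow 2)
      simpa using this
    have h4 := h3.sqrt
    rwa [Real.sqrt_sq (by positivity)] at h4
  have := ha.add hb
  rw [show 1/(2*Real.cosh s) + 1/(2*Real.cosh s) = 1/Real.cosh s by field_simp; norm_num] at this
  exact this.congr (fun R => (heq R).symm)

theorem g_R_tendsto (d : ℕ) (hd : 3 ≤ d) (ω : ℝ) (hω : 0 < ω) (s : ℝ) (hs : 0 ≤ s) :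
    Filter.Tendsto
      (fun R : ℝ =>
        Real.exp (-((d : ℝ) - 2) * R) * ω *
          ∫ u in (0:ℝ).._root_.arcosh (Real.cosh R / Real.cosh s), Real.sinh u ^ (d - 2))
      Filter.atTop
      (nhds (ω / (((d : ℝ) - 2) * 2 ^ (d - 2)) * (Real.cosh s) ^ (-((d : ℝ) - 2)))) := by
  set n : ℕ := d - 2 with hn
  have hn1 : 1 ≤ n := by omega
  have hcast : ((d : ℝ) - 2) = (n : ℝ) := by
    rw [hn]; push_cast [Nat.cast_sub (by omega : 2 ≤ d)]; ring
  have hcs : (0:ℝ) < Real.cosh s := Real.cosh_pos s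
  set T : ℝ → ℝ := fun R => _root_.arcosh (Real.cosh R / Real.cosh s) with hT
  have h1 : Tendsto (fun R : ℝ => exp (-(n:ℝ)*(T R)) * ∫ u in (0:ℝ)..(T R), sinh u ^ n)
      atTop (nhds (1/((n:ℝ)*2^n))) := (key_int n hn1).comp (arcosh_tendsto s)
  have h2 : Tendsto (fun R : ℝ => (exp (T R - R))^n) atTop (nhds ((1/Real.cosh s)^n)) :=
    (expfac s).pow n
  have h3 := (h1.mul h2).const_mul ω
  have heqfun : ∀ R : ℝ,
      ω * ((exp (-(n:ℝ)*(T R)) * ∫ u in (0:ℝ)..(T R), sinh u ^ n) * (exp (T R - R))^n) =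
      Real.exp (-((d : ℝ) - 2) * R) * ω *
        ∫ u in (0:ℝ).._root_.arcosh (Real.cosh R / Real.cosh s), Real.sinh u ^ (d - 2) := by
    intro R
    have hx : (exp (T R - R))^n = exp ((n:ℝ) * (T R - R)) := by
      rw [← Real.exp_nat_mul]
    have hy : exp (-(n:ℝ)*(T R)) * exp ((n:ℝ) * (T R - R)) = exp (-((d:ℝ)-2) * R) := by
      rw [← Real.exp_add, hcast]; ring_nf
    rw [hx, hcast]
    have : ∫ u in (0:ℝ).._root_.arcosh (Real.cosh R / Real.cosh s), Real.sinh u ^ (d-2) =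
        ∫ u in (0:ℝ)..(T R), sinh u ^ n := rfl
    rw [this]
    calc ω * ((exp (-(n:ℝ)*(T R)) * ∫ u in (0:ℝ)..(T R), sinh u ^ n) * exp ((n:ℝ)*(T R - R)))
        = (exp (-(n:ℝ)*(T R)) * exp ((n:ℝ)*(T R - R))) * ω *
            ∫ u in (0:ℝ)..(T R), sinh u ^ n := by ring
      _ = exp (-(n:ℝ) * R) * ω * ∫ u in (0:ℝ)..(T R), sinh u ^ n := by
          rw [hcast] at hy; rw [hy]
  have hlim : ω * (1/((n:ℝ)*2^n) * (1/Real.cosh s)^n) =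
      ω / (((d : ℝ) - 2) * 2 ^ (d - 2)) * (Real.cosh s) ^ (-((d : ℝ) - 2)) := by
    rw [hcast, Real.rpow_neg hcs.le, Real.rpow_natCast]
    rw [show (2:ℝ)^(d-2) = (2:ℝ)^n from rfl, div_eq_mul_inv, one_div, inv_pow]
    ring
  rw [← hlim]
  exact h3.congr heqfun
end

section
/- Let λ ∈ [0,1), Δ = artanh λ, and let R > 0 and s ∈ [−R, R]. Set q = (cosh R − sinh Δ · sinh(s − Δ)) / (cosh Δ · cosh(s − Δ)). Then cosh(R − Δ)/cosh(s − Δ) ≤ q ≤ cosh(R + Δ)/cosh(s − Δ); consequently arcosh(cosh(R−Δ)/cosh(s−Δ)) ≤ arcosh(q) ≤ arcosh(cosh(R+Δ)/cosh(s−Δ)) whenever all three quantities are ≥ 1. -/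
open Real

noncomputable def arcoshLog (t : ℝ) : ℝ := Real.log (t + Real.sqrt (t ^ 2 - 1))

lemma arcosh_mono {a b : ℝ} (ha : 1 ≤ a) (hab : a ≤ b) : arcoshLog a ≤ arcoshLog b := by
  unfold arcoshLog
  have hsq : Real.sqrt (a ^ 2 - 1) ≤ Real.sqrt (b ^ 2 - 1) := by
    apply Real.sqrt_le_sqrt; nlinarith
  apply Real.log_le_log (by positivity)
  linarith

theorem q_bounds (lam : ℝ) (hlam : lam ∈ Set.Ico (0:ℝ) 1) (R s : ℝ) (hR : 0 < R)
    (hs : s ∈ Set.Icc (-R) R) (Δ q : ℝ)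
    (hΔ : Δ = (1 / 2) * Real.log ((1 + lam) / (1 - lam)))
    (hq : q = (Real.cosh R - Real.sinh Δ * Real.sinh (s - Δ)) /
      (Real.cosh Δ * Real.cosh (s - Δ))) :
    (Real.cosh (R - Δ) / Real.cosh (s - Δ) ≤ q ∧
      q ≤ Real.cosh (R + Δ) / Real.cosh (s - Δ)) ∧
    (1 ≤ Real.cosh (R - Δ) / Real.cosh (s - Δ) → 1 ≤ q →
      1 ≤ Real.cosh (R + Δ) / Real.cosh (s - Δ) →
      arcoshLog (Real.cosh (R - Δ) / Real.cosh (s - Δ)) ≤ arcoshLog q ∧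
        arcoshLog q ≤ arcoshLog (Real.cosh (R + Δ) / Real.cosh (s - Δ))) := by
  obtain ⟨hl0, hl1⟩ := hlam
  have h1 : (0:ℝ) < 1 - lam := by linarith
  have hΔ0 : 0 ≤ Δ := by
    rw [hΔ]
    have : (1:ℝ) ≤ (1 + lam) / (1 - lam) := (one_le_div h1).2 (by linarith)
    nlinarith [Real.log_nonneg this]
  have hsinhΔ : 0 ≤ Real.sinh Δ := by simpa using Real.sinh_le_sinh.2 hΔ0
  have hc : 0 < Real.cosh (s - Δ) := Real.cosh_pos _
  have hd : 0 < Real.cosh Δ := Real.cosh_pos _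
  have hmono1 : Real.sinh (s - Δ) ≤ Real.sinh (R - Δ) :=
    Real.sinh_le_sinh.2 (by linarith [hs.2])
  have hmono2 : -Real.sinh (R + Δ) ≤ Real.sinh (s - Δ) := by
    rw [← Real.sinh_neg]
    exact Real.sinh_le_sinh.2 (by linarith [hs.1])
  have e1 : Real.cosh R
      = Real.cosh (R - Δ) * Real.cosh Δ + Real.sinh (R - Δ) * Real.sinh Δ := by
    have := Real.cosh_add (R - Δ) Δ
    rw [sub_add_cancel] at this
    linarith
  have e2 : Real.cosh R
      = Real.cosh (R + Δ) * Real.cosh Δ - Real.sinh (R + Δ) * Real.sinh Δ := by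
    have := Real.cosh_sub (R + Δ) Δ
    rw [add_sub_cancel_right] at this
    linarith
  have hlow : Real.cosh (R - Δ) / Real.cosh (s - Δ) ≤ q := by
    rw [hq, div_le_div_iff₀ hc (by positivity)]
    nlinarith [mul_nonneg hsinhΔ (sub_nonneg.2 hmono1)]
  have hhigh : q ≤ Real.cosh (R + Δ) / Real.cosh (s - Δ) := by
    rw [hq, div_le_div_iff₀ (by positivity) hc]
    nlinarith [mul_nonneg hsinhΔ (by linarith : (0:ℝ) ≤ Real.sinh (s - Δ) + Real.sinh (R + Δ))]
  refine ⟨⟨hlow, hhigh⟩, fun ha hb _ => ⟨arcosh_mono ha hlow, arcosh_mono hb hhigh⟩⟩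
end
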